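/- Let G be a finite set of finite sets, and let h : G → ℂ. Define for A ⊆ G the value H(A) = ∑_{x ∈ A} h(x), and define the matrix L indexed by G by L(x,y) = H({z ∈ G : z ⊆ x and z ⊆ y}). Then det(L) = ∏_{x ∈ G} h(x). -/

import Mathlib

open Finset Matrix

theorem stmt0 (G : Finset (Finset ℕ)) (h : Finset ℕ → ℂ) :
    Matrix.det (Matrix.of (fun x y : {x // x ∈ G} =>
      ∑ z ∈ G.filter (fun z => z ⊆ x.1 ∧ z ⊆ y.1), h z)) = ∏ x ∈ G, h x := by
  classical
  let A : Matrix {x // x ∈ G} {x // x ∈ G} ℂ := fun i j => if i.1 ⊆ j.1 then 1 else 0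
  let D : Matrix {x // x ∈ G} {x // x ∈ G} ℂ := Matrix.diagonal (fun z => h z.1)
  have hL : Matrix.of (fun x y : {x // x ∈ G} =>
      ∑ z ∈ G.filter (fun z => z ⊆ x.1 ∧ z ⊆ y.1), h z) = Aᵀ * (D * A) := by
    ext x y
    rw [Matrix.mul_apply]
    simp only [Matrix.of_apply, Matrix.transpose_apply, D, Matrix.diagonal_mul]
    simp only [A]
    rw [Finset.sum_filter, ← Finset.sum_coe_sort G]
    apply Finset.sum_congr rfl
    intro z _
    by_cases h1 : z.1 ⊆ x.1 <;> by_cases h2 : z.1 ⊆ y.1 <;>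
      simp [h1, h2]
  have hA : A.det = 1 := by
    have hbt : A.BlockTriangular (fun i => i.1.card) := by
      intro i j hij
      simp only [A]
      rw [if_neg]
      intro hsub
      exact absurd (Finset.card_le_card hsub) (not_le_of_gt hij)
    rw [hbt.det]
    apply Finset.prod_eq_one
    intro a _
    have : A.toSquareBlock (fun i => i.1.card) a = 1 := by
      ext i j
      simp only [Matrix.toSquareBlock_def, Matrix.one_apply, Matrix.of_apply]
      simp only [A]
      by_cases hij : i = j
      · simp [hij]
      · rw [if_neg hij, if_neg]
        intro hsub
        apply hij
        have hcard : j.1.1.card ≤ i.1.1.card := le_of_eq (j.2.trans i.2.symm)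
        exact Subtype.ext (Subtype.ext (Finset.eq_of_subset_of_card_le hsub hcard))
    rw [this, Matrix.det_one]
  rw [hL, Matrix.det_mul, Matrix.det_mul, Matrix.det_transpose, hA,
    Matrix.det_diagonal, one_mul, mul_one, ← Finset.prod_coe_sort G]
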